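/- Let w : ℂ → ℂ be a solution of the Airy equation w'' = z·w that is real on the real axis. Suppose α = r·e^{iφ} with r > 0, 0 < φ < π, and w'(α) = 0 and w'(ᾱ) = 0. Then w(0)·w'(0)·sin(2φ) = −r·sin(3φ)·∫₀¹ |w'(αt)|² dt. -/

import Mathlib

open Complex Real Topology

/-- Derivative of the conjugate-reflected function. -/
lemma hasDerivAt_conj_conj {w : ℂ → ℂ} {d z : ℂ} (h : HasDerivAt w d (starRingEnd ℂ z)) :
    HasDerivAt (fun x => starRingEnd ℂ (w (starRingEnd ℂ x))) (starRingEnd ℂ d) z := by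
  rw [hasDerivAt_iff_tendsto_slope] at h ⊢
  have hconj : Filter.Tendsto (starRingEnd ℂ) (𝓝[≠] z) (𝓝[≠] (starRingEnd ℂ z)) := by
    apply Filter.Tendsto.inf ((Complex.continuous_conj.tendsto z))
    rw [Filter.tendsto_principal_principal]
    intro x hx
    simp only [Set.mem_compl_iff, Set.mem_singleton_iff] at hx ⊢
    exact fun hc => hx (by simpa using congrArg (starRingEnd ℂ) hc)
  have := (Complex.continuous_conj.tendsto d).comp (h.comp hconj)
  refine this.congr' ?_
  filter_upwards [self_mem_nhdsWithin] with x hx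
  simp only [Set.mem_compl_iff, Set.mem_singleton_iff] at hx
  simp only [Function.comp_apply, slope_def_field, map_div₀, map_sub, Complex.conj_conj]

lemma deriv_conj' {w : ℂ → ℂ} (hw : Differentiable ℂ w)
    (hreal : ∀ x : ℂ, w (starRingEnd ℂ x) = starRingEnd ℂ (w x)) (z : ℂ) :
    deriv w (starRingEnd ℂ z) = starRingEnd ℂ (deriv w z) := by
  have h := hasDerivAt_conj_conj ((hw (starRingEnd ℂ z)).hasDerivAt)
  have heq : (fun x => starRingEnd ℂ (w (starRingEnd ℂ x))) = w := by
    funext x; rw [hreal]; simp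
  rw [heq] at h
  have : deriv w z = starRingEnd ℂ (deriv w (starRingEnd ℂ z)) := h.deriv
  rw [this]; simp

theorem lommel_integral_deriv_zeros (w : ℂ → ℂ)
    (hw : Differentiable ℂ w) (hw' : Differentiable ℂ (deriv w))
    (hairy : ∀ z : ℂ, deriv (deriv w) z = z * w z)
    (hreal : ∀ x : ℂ, w (starRingEnd ℂ x) = starRingEnd ℂ (w x))
    (r φ : ℝ) (hr : 0 < r) (hφ : 0 < φ ∧ φ < Real.pi)
    (α : ℂ) (hα : α = r * Complex.exp (φ * Complex.I))
    (hz : deriv w α = 0) (hz' : deriv w (starRingEnd ℂ α) = 0) :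
    w 0 * deriv w 0 * (Real.sin (2 * φ) : ℂ)
      = -((r * Real.sin (3 * φ) * ∫ t in (0:ℝ)..1, ‖deriv w (α * t)‖ ^ 2 : ℝ) : ℂ) := by
  set d := deriv w with hd
  set β := starRingEnd ℂ α with hβ
  -- derivative of t ↦ w (c * t)
  have hW : ∀ (c : ℂ) (t : ℝ), HasDerivAt (fun t : ℝ => w (c * t)) (c * d (c * t)) t := by
    intro c t
    have h2 : HasDerivAt (fun z : ℂ => c * z) c (t : ℂ) := by
      simpa using (hasDerivAt_id (t : ℂ)).const_mul c
    have h1 : HasDerivAt (fun z : ℂ => w (c * z)) (d (c * t) * c) (t : ℂ) :=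
      HasDerivAt.comp (t : ℂ) ((hw (c * t)).hasDerivAt) h2
    have := h1.comp_ofReal
    simpa [mul_comm] using this
  have hD : ∀ (c : ℂ) (t : ℝ), HasDerivAt (fun t : ℝ => d (c * t)) (c * ((c * t) * w (c * t))) t := by
    intro c t
    have h2 : HasDerivAt (fun z : ℂ => c * z) c (t : ℂ) := by
      simpa using (hasDerivAt_id (t : ℂ)).const_mul c
    have h1 : HasDerivAt (fun z : ℂ => d (c * z)) (deriv d (c * t) * c) (t : ℂ) :=
      HasDerivAt.comp (t : ℂ) ((hw' (c * t)).hasDerivAt) h2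
    have := h1.comp_ofReal
    rw [hd, hairy] at this
    simpa [mul_comm, mul_assoc, mul_left_comm] using this
  -- the Lommel function F
  set F : ℝ → ℂ := fun t => α ^ 2 * (d (β * t) * w (α * t)) - β ^ 2 * (d (α * t) * w (β * t))
    with hF
  have hF' : ∀ t : ℝ, HasDerivAt F ((α ^ 3 - β ^ 3) * (d (β * t) * d (α * t))) t := by
    intro t
    have h1 := (((hD β t).mul (hW α t)).const_mul (α ^ 2)).sub
      (((hD α t).mul (hW β t)).const_mul (β ^ 2))
    exact h1.congr_deriv (by ring)
  have hdc : Continuous d := hw'.continuous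
  have hwc : Continuous w := hw.continuous
  have hcont : Continuous fun t : ℝ => (α ^ 3 - β ^ 3) * (d (β * t) * d (α * t)) := by
    fun_prop
  have hint : (∫ t in (0:ℝ)..1, (α ^ 3 - β ^ 3) * (d (β * t) * d (α * t))) = F 1 - F 0 :=
    intervalIntegral.integral_eq_sub_of_hasDerivAt (fun t _ => hF' t)
      (hcont.intervalIntegrable 0 1)
  have hF1 : F 1 = 0 := by
    simp [hF, hz, ← hβ, hz']
  have hF0 : F 0 = (α ^ 2 - β ^ 2) * (d 0 * w 0) := by
    simp [hF]; ring
  -- rewrite the integrand as the norm squared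
  have hconjd : ∀ t : ℝ, d (β * t) = starRingEnd ℂ (d (α * t)) := by
    intro t
    have : β * (t : ℂ) = starRingEnd ℂ (α * t) := by
      rw [hβ]; simp [Complex.conj_ofReal]
    rw [this, hd, deriv_conj' hw hreal]
  have hint2 : (∫ t in (0:ℝ)..1, d (β * t) * d (α * t))
      = ((∫ t in (0:ℝ)..1, ‖d (α * t)‖ ^ 2 : ℝ) : ℂ) := by
    rw [← intervalIntegral.integral_ofReal]
    apply intervalIntegral.integral_congr
    intro t _
    dsimp only
    rw [hconjd t]
    rw [← Complex.normSq_eq_conj_mul_self]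
    simp [Complex.normSq_eq_norm_sq]
  rw [intervalIntegral.integral_const_mul, hint2, hF1, hF0, zero_sub] at hint
  -- compute the powers of α
  have hβval : β = (r : ℂ) * Complex.exp (-(φ * Complex.I)) := by
    rw [hβ, hα]
    rw [map_mul, ← Complex.exp_conj]
    simp [Complex.conj_ofReal]
  have hexp : ∀ n : ℕ, α ^ n - β ^ n
      = (r : ℂ) ^ n * (2 * (Real.sin (n * φ) : ℂ) * Complex.I) := by
    intro n
    rw [hα, hβval, mul_pow, mul_pow, ← Complex.exp_nat_mul, ← Complex.exp_nat_mul]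
    have h1 : (n : ℂ) * ((φ : ℂ) * Complex.I) = ((n * φ : ℝ) : ℂ) * Complex.I := by
      push_cast; ring
    have h2 : (n : ℂ) * (-((φ : ℂ) * Complex.I)) = (-(n * φ : ℝ) : ℂ) * Complex.I := by
      push_cast; ring
    rw [h1, h2, Complex.exp_mul_I, Complex.exp_mul_I]
    push_cast
    rw [Complex.sin_neg, Complex.cos_neg]
    ring
  have h2' := hexp 2
  have h3' := hexp 3
  rw [h2', h3'] at hint
  -- final algebra
  have hr0 : (r : ℂ) ≠ 0 := by
    exact_mod_cast ne_of_gt hr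
  have hcoef : (2 * (r : ℂ) ^ 2 * Complex.I) ≠ 0 := by
    simp [hr0, Complex.I_ne_zero]
  apply mul_left_cancel₀ hcoef
  push_cast at hint ⊢
  linear_combination hint
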